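/- Conversely to the previous statement, suppose ξ, η : ℂ → ℂ are analytic near 0, define e₊ and f₊ as before, and assume e₊(w)·e₊(−w) = 1 and f₊(w) = −ε·f₊(−w)·e₊(w) hold identically on a punctured neighborhood of 0 where the relevant denominators are nonzero. Then ξ(−w) = ξ(w) and η(−w) = ε·η(w) on that neighborhood. -/

import Mathlib

open Complex

theorem stmt_7 (ξ η : ℂ → ℂ) (ε : ℂ) (hε : ε = 1 ∨ ε = -1) (r : ℝ) (hr : 0 < r)
    (hξa : AnalyticAt ℂ ξ 0) (hηa : AnalyticAt ℂ η 0)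
    (hden : ∀ w : ℂ, ‖w‖ < r → 1 + w * ξ w ≠ 0)
    (e f : ℂ → ℂ)
    (he : ∀ w : ℂ, 1 + w * ξ w ≠ 0 → e w = (1 - w * ξ w) / (1 + w * ξ w))
    (hf : ∀ w : ℂ, 1 + w * ξ w ≠ 0 → f w = w * η w / (1 + w * ξ w))
    (hsym : ∀ w : ℂ, ‖w‖ < r → w ≠ 0 →
      e w * e (-w) = 1 ∧ f w = -ε * f (-w) * e w) :
    ∀ w : ℂ, ‖w‖ < r → ξ (-w) = ξ w ∧ η (-w) = ε * η w := by
  have hε2 : ε * ε = 1 := by rcases hε with h | h <;> simp [h]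
  -- main claim away from 0
  have key : ∀ w : ℂ, ‖w‖ < r → w ≠ 0 → ξ (-w) = ξ w ∧ η (-w) = ε * η w := by
    intro w hw hw0
    have hw' : ‖(-w : ℂ)‖ < r := by simpa using hw
    have h1 : (1 : ℂ) + w * ξ w ≠ 0 := hden w hw
    have h2 : (1 : ℂ) + (-w) * ξ (-w) ≠ 0 := hden (-w) hw'
    obtain ⟨hE, hF⟩ := hsym w hw hw0
    rw [he w h1, he (-w) h2] at hE
    rw [hf w h1, hf (-w) h2, he w h1] at hF
    have hxi : ξ (-w) = ξ w := by
      rw [div_mul_div_comm, div_eq_one_iff_eq (mul_ne_zero h1 h2)] at hE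
      have h2w : (2 : ℂ) * w ≠ 0 := by simp [hw0]
      have hl : (2 : ℂ) * w * ξ (-w) = 2 * w * ξ w := by linear_combination hE
      exact mul_left_cancel₀ h2w hl
    refine ⟨hxi, ?_⟩
    rw [hxi] at hF h2
    rw [show (1 : ℂ) + -w * ξ w = 1 - w * ξ w by ring] at hF h2
    field_simp [h1, h2] at hF
    have hη : η w = ε * η (-w) := by
      have hl : w * η w = w * (ε * η (-w)) := by linear_combination w * hF
      exact mul_left_cancel₀ hw0 hl
    rw [hη, ← mul_assoc, hε2, one_mul]
  intro w hw
  rcases eq_or_ne w 0 with rfl | hw0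
  · constructor
    · simp
    · -- continuity argument: η 0 = ε * η 0
      have hcont : ContinuousAt (fun z => η (-z) - ε * η z) 0 :=
        ((show ContinuousAt η (-(0:ℂ)) by simpa using hηa.continuousAt).comp
          continuous_neg.continuousAt).sub (continuousAt_const.mul hηa.continuousAt)
      have hev : ∀ᶠ z in nhdsWithin (0 : ℂ) {(0:ℂ)}ᶜ, (fun z => η (-z) - ε * η z) z = 0 := by
        have hball : ∀ᶠ z in nhds (0 : ℂ), ‖z‖ < r := by
          have := Metric.ball_mem_nhds (0 : ℂ) hr
          filter_upwards [this] with z hz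
          simpa [Metric.mem_ball, dist_eq_norm] using hz
        filter_upwards [nhdsWithin_le_nhds hball, self_mem_nhdsWithin] with z hz hz0
        have := (key z hz hz0).2
        simp [this]
      have h1 : Filter.Tendsto (fun z => η (-z) - ε * η z) (nhdsWithin (0 : ℂ) {(0:ℂ)}ᶜ) (nhds (η (-(0:ℂ)) - ε * η 0)) :=
        hcont.continuousWithinAt.tendsto
      have h2 : Filter.Tendsto (fun z => η (-z) - ε * η z) (nhdsWithin (0 : ℂ) {(0:ℂ)}ᶜ) (nhds 0) := by
        exact Filter.Tendsto.congr' (Filter.EventuallyEq.symm hev) tendsto_const_nhds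
      have := tendsto_nhds_unique h1 h2
      have h3 : η 0 - ε * η 0 = 0 := by simpa using this
      rw [neg_zero]
      exact sub_eq_zero.mp h3
  · exact key w hw hw0
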